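/- The one-dimensional Hausdorff measure of the interior nodal set of the Steklov eigenfunction u(z) = Im(z^m) on the open unit disk equals 2m. -/

import Mathlib

open Complex Metric MeasureTheory Set
open scoped ENNReal Real

namespace Stmt3Aux

/-- unit vector at angle `π k / m`. -/
noncomputable def e (m k : ℕ) : ℂ := Complex.exp ((π * k / m : ℝ) * Complex.I)

lemma abs_e (m k : ℕ) : ‖e m k‖ = 1 := Complex.norm_exp_ofReal_mul_I _

/-- parametrization of the `k`-th diameter. -/
noncomputable def f (m k : ℕ) : ℝ → ℂ := fun t => (t : ℂ) * e m k

lemma isometry_f (m k : ℕ) : Isometry (f m k) := by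
  apply Isometry.of_dist_eq
  intro a b
  simp only [f, Complex.dist_eq]
  rw [← sub_mul, norm_mul, abs_e, mul_one, ← Complex.ofReal_sub, Complex.norm_real,
    Real.norm_eq_abs, Real.dist_eq]

lemma measure_L (m k : ℕ) :
    μH[1] (f m k '' Ioo (-1 : ℝ) 1) = 2 := by
  rw [(isometry_f m k).hausdorffMeasure_image (Or.inl zero_le_one),
    MeasureTheory.hausdorffMeasure_real, Real.volume_Ioo]
  norm_num

lemma set_eq (m : ℕ) (hm : 0 < m) :
    {z : ℂ | z ∈ Metric.ball (0 : ℂ) 1 ∧ (z ^ m).im = 0}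
      = ⋃ k ∈ Finset.range m, f m k '' Ioo (-1 : ℝ) 1 := by
  have hm' : (m : ℝ) ≠ 0 := Nat.cast_ne_zero.2 hm.ne'
  ext z
  simp only [mem_setOf_eq, mem_ball, dist_zero_right, Finset.mem_range,
    mem_iUnion, mem_image, mem_Ioo, exists_prop]
  constructor
  · rintro ⟨hz1, hz2⟩
    rcases eq_or_ne z 0 with rfl | hz0
    · exact ⟨0, hm, 0, by norm_num, by simp [f]⟩
    · -- write z in polar form
      have habs : (0 : ℝ) < ‖z‖ := norm_pos_iff.mpr hz0
      have hpolar : (‖z‖ : ℂ) * Complex.exp (Complex.arg z * Complex.I) = z :=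
        Complex.norm_mul_exp_arg_mul_I z
      have hzm : z ^ m = ((‖z‖ ^ m : ℝ) : ℂ)
          * Complex.exp ((m * Complex.arg z : ℝ) * Complex.I) := by
        conv_lhs => rw [← hpolar]
        rw [mul_pow, ← Complex.exp_nat_mul]
        push_cast
        ring_nf
      have hsin : Real.sin (m * Complex.arg z) = 0 := by
        have := hz2
        rw [hzm] at this
        simp only [Complex.mul_im, Complex.ofReal_re, Complex.ofReal_im, zero_mul, add_zero,
          Complex.exp_ofReal_mul_I_im] at this
        have hne : (‖z‖) ^ m ≠ 0 := pow_ne_zero _ habs.ne'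
        exact (mul_eq_zero.1 this).resolve_left hne
      obtain ⟨n, hn⟩ := Real.sin_eq_zero_iff.1 hsin
      -- arg z = n π / m
      have harg : Complex.arg z = n * π / m := by
        field_simp
        linarith [hn]
      set q : ℤ := n / m with hq
      set k : ℕ := (n % m).toNat with hk
      have hmod : (0 : ℤ) ≤ n % m := Int.emod_nonneg n (by exact_mod_cast hm.ne')
      have hklt : (n % m : ℤ) < m := Int.emod_lt_of_pos n (by exact_mod_cast hm)
      have hkm : k < m := by omega
      have hnk : (n : ℝ) = q * m + k := by
        have h1 : (m : ℤ) * q + n % m = n := Int.mul_ediv_add_emod n m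
        have hk' : ((n % m : ℤ) : ℝ) = (k : ℝ) := by
          rw [hk]; exact_mod_cast (Int.toNat_of_nonneg hmod).symm
        have h2 : (n : ℝ) = (m : ℝ) * (q : ℝ) + ((n % m : ℤ) : ℝ) := by
          exact_mod_cast congrArg (Int.cast : ℤ → ℝ) h1.symm
        rw [h2, hk']; ring
      refine ⟨k, hkm, ‖z‖ * (-1 : ℝ) ^ q, ?_, ?_⟩
      · have hpm : |(-1 : ℝ) ^ q| = 1 := by
          rcases Int.even_or_odd q with h | h
          · rw [h.neg_one_zpow]; norm_num
          · rw [h.neg_one_zpow]; norm_num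
        have habs' : |‖z‖ * (-1 : ℝ) ^ q| = ‖z‖ := by
          rw [_root_.abs_mul, hpm, mul_one, _root_.abs_of_pos habs]
        have h2 : |‖z‖ * (-1 : ℝ) ^ q| < 1 := by rw [habs']; exact hz1
        exact abs_lt.1 h2
      · -- z = t * e m k
        rw [f]
        conv_rhs => rw [← hpolar]
        have hsplit : (Complex.arg z : ℝ) = q * π + π * k / m := by
          rw [harg, hnk]; field_simp
        have hexp : Complex.exp (Complex.arg z * Complex.I)
            = ((-1 : ℝ) ^ q : ℝ) * e m k := by
          rw [show ((Complex.arg z : ℂ)) = ((q * π + π * k / m : ℝ) : ℂ) by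
            exact_mod_cast congrArg (Complex.ofReal) hsplit]
          push_cast
          rw [add_mul, Complex.exp_add, e,
            show ((q : ℂ) * π * Complex.I) = q * (π * Complex.I) by ring,
            Complex.exp_int_mul, Complex.exp_pi_mul_I]
          push_cast
          ring
        rw [hexp]
        push_cast
        ring
  · rintro ⟨k, hkm, t, ⟨ht1, ht2⟩, rfl⟩
    constructor
    · rw [f, norm_mul, abs_e, mul_one, Complex.norm_real, Real.norm_eq_abs]
      exact abs_lt.2 ⟨ht1, ht2⟩
    · rw [f, mul_pow, ← Complex.ofReal_pow, e, ← Complex.exp_nat_mul]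
      have hmc : (m : ℂ) ≠ 0 := Nat.cast_ne_zero.2 hm.ne'
      have : (m : ℂ) * ((π * k / m : ℝ) * Complex.I) = ((k * π : ℝ) : ℂ) * Complex.I := by
        push_cast
        field_simp
      rw [this]
      simp only [Complex.mul_im, Complex.ofReal_re, Complex.ofReal_im, zero_mul, add_zero,
        Complex.exp_ofReal_mul_I_im]
      rw [show (k : ℝ) * π = (k : ℕ) * π by norm_cast, Real.sin_nat_mul_pi, mul_zero]

lemma inter_subset (m : ℕ) (hm : 0 < m) {j k : ℕ} (hj : j < m) (hk : k < m) (hjk : j ≠ k) :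
    (f m j '' Ioo (-1 : ℝ) 1) ∩ (f m k '' Ioo (-1 : ℝ) 1) ⊆ {0} := by
  have hm' : (m : ℝ) ≠ 0 := Nat.cast_ne_zero.2 hm.ne'
  rintro z ⟨⟨t, _, rfl⟩, ⟨s, _, hs⟩⟩
  rcases eq_or_ne t 0 with rfl | ht0
  · simp only [f, Complex.ofReal_zero, zero_mul, mem_singleton_iff]
  exfalso
  -- t * e j = s * e k, multiply by exp(-(π k / m) I)
  have key : (t : ℂ) * Complex.exp ((π * j / m - π * k / m : ℝ) * Complex.I) = (s : ℂ) := by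
    have := congrArg (· * Complex.exp (-((π * k / m : ℝ) * Complex.I))) hs.symm
    simp only [f, e] at this ⊢
    rw [mul_assoc, mul_assoc, ← Complex.exp_add, ← Complex.exp_add] at this
    rw [show ((π * k / m : ℝ) : ℂ) * Complex.I + -(((π * k / m : ℝ) : ℂ) * Complex.I) = 0
      by ring, Complex.exp_zero, mul_one] at this
    rw [← this]
    congr 2
    push_cast
    ring
  have him := congrArg Complex.im key
  simp only [Complex.mul_im, Complex.ofReal_re, Complex.ofReal_im, zero_mul, add_zero,
    Complex.exp_ofReal_mul_I_im] at him
  have hsin : Real.sin (π * j / m - π * k / m) = 0 := by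
    rcases mul_eq_zero.1 him with h | h
    · exact absurd h ht0
    · exact h
  obtain ⟨n, hn⟩ := Real.sin_eq_zero_iff.1 hsin
  have hπ : (0 : ℝ) < π := Real.pi_pos
  have heq : (j : ℝ) - k = n * m := by
    have : n * π * m = π * j - π * k := by
      field_simp at hn
      linear_combination π * hn
    nlinarith [this]
  have hjkne : (j : ℝ) - k ≠ 0 := by
    intro h
    exact hjk (by exact_mod_cast sub_eq_zero.1 h)
  have hn0 : n ≠ 0 := by
    rintro rfl
    simp at heq
    exact hjkne (by linarith)
  have h1 : (1 : ℝ) ≤ |(n : ℝ)| := by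
    have : (1 : ℤ) ≤ |n| := Int.one_le_abs hn0
    exact_mod_cast this
  have hlt : |(j : ℝ) - k| < m := by
    rw [abs_sub_lt_iff]
    constructor
    · have : (j : ℝ) < m := by exact_mod_cast hj
      have hk0 : (0 : ℝ) ≤ k := Nat.cast_nonneg k
      linarith
    · have : (k : ℝ) < m := by exact_mod_cast hk
      have hj0 : (0 : ℝ) ≤ j := Nat.cast_nonneg j
      linarith
  rw [heq, abs_mul, Nat.abs_cast] at hlt
  have hmpos : (0 : ℝ) < m := by exact_mod_cast hm
  nlinarith [hlt, h1, hmpos]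

end Stmt3Aux

/-- The 1-dimensional Hausdorff measure of the interior nodal set of the Steklov
eigenfunction `u(z) = Im (z^m)` on the open unit disk equals `2m`. -/
theorem stmt_3 (m : ℕ) (hm : 0 < m) :
    μH[1] {z : ℂ | z ∈ Metric.ball (0 : ℂ) 1 ∧ (z ^ m).im = 0} = (2 * m : ℝ≥0∞) := by
  have hatom : NoAtoms (μH[1] : Measure ℂ) := MeasureTheory.Measure.noAtoms_hausdorff ℂ one_pos
  rw [Stmt3Aux.set_eq m hm]
  rw [measure_biUnion_finset₀ ?_ ?_]
  · rw [Finset.sum_congr rfl (fun k _ => Stmt3Aux.measure_L m k), Finset.sum_const,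
      Finset.card_range, nsmul_eq_mul, mul_comm]
  · intro j hj k hk hjk
    apply measure_mono_null (Stmt3Aux.inter_subset m hm (Finset.mem_range.1 hj)
      (Finset.mem_range.1 hk) hjk)
    exact hatom.measure_singleton 0
  · intro k _
    exact (((Stmt3Aux.isometry_f m k).isClosedEmbedding.measurableEmbedding).measurableSet_image.2
      measurableSet_Ioo).nullMeasurableSet
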